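/- Let G be a graph with odd-girth(G) ≥ 2k+1, let 1 ≤ s ≤ k-1 and fix edges e_1,...,e_s of G. Define G_s by adding, for each pair of distinct vertices u,v, the edge {u,v} whenever u and v are even-connected with respect to e_1⋯e_s. Then G_s contains no odd cycle of length at most 2(k-s)-1. -/

import Mathlib

open SimpleGraph

namespace OddGirthAux

variable {V : Type*}

/-! ### Prefix and suffix of walks by index -/

/-- The first `n` steps of a walk. -/
def takeW {G : SimpleGraph V} : ∀ {u v : V} (p : G.Walk u v) (n : ℕ), G.Walk u (p.getVert n)
  | _, _, p, 0 => Walk.nil.copy rfl (p.getVert_zero).symm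
  | _, _, Walk.nil, _+1 => Walk.nil
  | _, _, Walk.cons h q, n+1 => Walk.cons h (takeW q n)

/-- The walk after removing the first `n` steps. -/
def dropW {G : SimpleGraph V} : ∀ {u v : V} (p : G.Walk u v) (n : ℕ), G.Walk (p.getVert n) v
  | _, _, p, 0 => p.copy (p.getVert_zero).symm rfl
  | _, _, Walk.nil, _+1 => Walk.nil
  | _, _, Walk.cons _ q, n+1 => dropW q n

lemma takeW_length {G : SimpleGraph V} :
    ∀ {u v : V} (p : G.Walk u v) (n : ℕ), n ≤ p.length → (takeW p n).length = n
  | _, _, p, 0, _ => by simp [takeW]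
  | _, _, Walk.nil, n+1, h => by simp at h
  | _, _, Walk.cons hadj q, n+1, h => by
      simp only [takeW, Walk.length_cons]
      exact congrArg (· + 1) (takeW_length q n (by simpa using h))

lemma takeW_getVert {G : SimpleGraph V} :
    ∀ {u v : V} (p : G.Walk u v) (n i : ℕ), i ≤ n → (takeW p n).getVert i = p.getVert i
  | _, _, p, 0, i, h => by
      interval_cases i
      simp [takeW]
  | _, _, Walk.nil, n+1, i, h => by simp [takeW]
  | _, _, Walk.cons hadj q, n+1, i, h => by
      cases i with
      | zero => simp [takeW]
      | succ j =>
          simp only [takeW, Walk.getVert_cons_succ]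
          exact takeW_getVert q n j (by omega)

lemma dropW_length {G : SimpleGraph V} :
    ∀ {u v : V} (p : G.Walk u v) (n : ℕ), (dropW p n).length = p.length - n
  | _, _, p, 0 => by simp [dropW]
  | _, _, Walk.nil, n+1 => by simp [dropW]
  | _, _, Walk.cons hadj q, n+1 => by
      simp only [dropW, Walk.length_cons]
      refine (dropW_length q n).trans ?_
      omega

lemma dropW_getVert {G : SimpleGraph V} :
    ∀ {u v : V} (p : G.Walk u v) (n i : ℕ), (dropW p n).getVert i = p.getVert (n + i)
  | _, _, p, 0, i => by simp [dropW]
  | _, _, Walk.nil, n+1, i => by simp [dropW, Walk.getVert]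
  | _, _, Walk.cons hadj q, n+1, i => by
      have hidx : n + 1 + i = (n + i) + 1 := by omega
      rw [hidx]
      simp only [dropW, Walk.getVert_cons_succ]
      exact dropW_getVert q n i

/-! ### From cycles to closed walks -/

/-- If a path from `y` to `z` contains the edge `{z,y}` then it has length one. -/
lemma length_eq_one_of_mem_edges {G : SimpleGraph V} :
    ∀ {y z : V} (r : G.Walk y z), r.IsPath → s(z, y) ∈ r.edges → r.length = 1 := by
  intro y z r
  induction r with
  | nil => simp
  | @cons y w z h₂ r₂ ih =>
      intro hp he
      rw [Walk.edges_cons, List.mem_cons] at he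
      rw [Walk.cons_isPath_iff] at hp
      rcases he with he | he
      · rw [Sym2.eq_iff] at he
        rcases he with ⟨hzy, _⟩ | hzw
        · exact absurd (hzy ▸ r₂.end_mem_support) hp.2
        · rcases hzw with ⟨rfl, -⟩
          have : r₂.length = 0 := by
            cases r₂ with
            | nil => rfl
            | cons h₃ r₃ =>
                exfalso
                have hp1 := hp.1
                rw [Walk.cons_isPath_iff] at hp1
                exact hp1.2 r₃.end_mem_support
          simp [this]
      · exfalso
        exact hp.2 (Walk.snd_mem_support_of_mem_edges r₂ he)

/-- A closed walk whose tail is not a path can be split into two strictly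
shorter closed walks. -/
lemma split_of_not_path {G : SimpleGraph V} {z y : V} (h : G.Adj z y) (r : G.Walk y z)
    (hnp : ¬ r.IsPath) :
    ∃ (x : V) (inner : G.Walk x x) (outer : G.Walk z z),
      inner.length + outer.length = (Walk.cons h r).length ∧
      1 ≤ inner.length ∧ 1 ≤ outer.length := by
  classical
  rw [Walk.isPath_def] at hnp
  obtain ⟨x, hdup⟩ := List.exists_duplicate_iff_not_nodup.mpr hnp
  have hcount : 2 ≤ r.support.count x := List.duplicate_iff_two_le_count.mp hdup
  have hx : x ∈ r.support := hdup.mem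
  have hspec := r.take_spec hx
  have hcount1 : (r.takeUntil x hx).support.count x = 1 :=
    r.count_support_takeUntil_eq_one hx
  have hsup : r.support = (r.takeUntil x hx).support ++ (r.dropUntil x hx).support.tail := by
    conv_lhs => rw [← hspec]
    exact Walk.support_append _ _
  have hxd : x ∈ (r.dropUntil x hx).support.tail := by
    rw [hsup, List.count_append, hcount1] at hcount
    have h1 : 0 < ((r.dropUntil x hx).support.tail).count x := by omega
    exact List.count_pos_iff.mp h1
  have hlen : (r.takeUntil x hx).length + (r.dropUntil x hx).length = r.length := by
    have := congrArg Walk.length hspec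
    rwa [Walk.length_append] at this
  set D := r.dropUntil x hx with hD
  cases hDc : D with
  | nil =>
      exfalso
      rw [hDc] at hxd
      simp at hxd
  | @cons _ w _ h₂ D₂ =>
      have hxd₂ : x ∈ D₂.support := by
        rw [hDc] at hxd
        simpa using hxd
      refine ⟨x, Walk.cons h₂ (D₂.takeUntil x hxd₂),
        Walk.cons h ((r.takeUntil x hx).append (D₂.dropUntil x hxd₂)), ?_, ?_, ?_⟩
      · have hlen₂ : (D₂.takeUntil x hxd₂).length + (D₂.dropUntil x hxd₂).length = D₂.length := by
          have := congrArg Walk.length (D₂.take_spec hxd₂)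
          rwa [Walk.length_append] at this
        have hDlen : D.length = D₂.length + 1 := by rw [hDc]; simp
        simp only [Walk.length_cons, Walk.length_append]
        omega
      · simp
      · simp

/-- A bound on odd cycles yields the same bound on all odd closed walks. -/
lemma noOdd_of_cycleBound {G : SimpleGraph V} {n : ℕ}
    (h : ∀ (u : V) (c : G.Walk u u), c.IsCycle → Odd c.length → n ≤ c.length) :
    ∀ ⦃z : V⦄ (C : G.Walk z z), Odd C.length → n ≤ C.length := by
  have key : ∀ (L : ℕ) ⦃z : V⦄ (C : G.Walk z z), C.length ≤ L → Odd C.length → n ≤ C.length := by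
    intro L
    induction L with
    | zero =>
        intro z C hC hodd
        rw [Nat.odd_iff] at hodd
        omega
    | succ L ih =>
        intro z C hC hodd
        cases C with
        | nil => rw [Nat.odd_iff] at hodd; simp at hodd
        | @cons _ y _ hadj r =>
            by_cases hp : r.IsPath
            · by_cases hedge : s(z, y) ∈ r.edges
              · exfalso
                have := length_eq_one_of_mem_edges r hp hedge
                rw [Nat.odd_iff] at hodd
                simp [this] at hodd
              · exact h z (Walk.cons hadj r) ((Walk.cons_isCycle_iff r hadj).mpr ⟨hp, hedge⟩) hodd
            · obtain ⟨x, inner, outer, hsum, hi, ho⟩ := split_of_not_path hadj r hp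
              rw [Nat.odd_iff] at hodd
              have hpar : inner.length % 2 = 1 ∨ outer.length % 2 = 1 := by omega
              rcases hpar with hpar | hpar
              · have := ih inner (by simp only [Walk.length_cons] at hsum hC ⊢; omega)
                  (Nat.odd_iff.mpr hpar)
                omega
              · have := ih outer (by simp only [Walk.length_cons] at hsum hC ⊢; omega)
                  (Nat.odd_iff.mpr hpar)
                omega
  intro z C hodd
  exact key C.length C le_rfl hodd


/-! ### The one-edge construction -/

/-- Add to `H` all pairs of vertices joined by a path of length three through `e`. -/
def addE (H : SimpleGraph V) (e : Sym2 V) : SimpleGraph V :=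
  H ⊔ SimpleGraph.fromRel (fun u v => ∃ x y, e = s(x, y) ∧ H.Adj u x ∧ H.Adj y v)

lemma le_addE (H : SimpleGraph V) (e : Sym2 V) : H ≤ addE H e := le_sup_left

lemma le_foldl_addE : ∀ (es : List (Sym2 V)) (H : SimpleGraph V), H ≤ es.foldl addE H
  | [], _ => le_rfl
  | e :: tl, H => le_trans (le_addE H e) (by simpa using le_foldl_addE tl (addE H e))

lemma addE_adj {H : SimpleGraph V} {e : Sym2 V} {u v : V} (h : (addE H e).Adj u v) :
    H.Adj u v ∨ ∃ x y : V, s(x, y) = e ∧ H.Adj u x ∧ H.Adj y v := by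
  rcases (SimpleGraph.sup_adj _ _ _ _).mp h with h | h
  · exact Or.inl h
  · rw [SimpleGraph.fromRel_adj] at h
    obtain ⟨hne, h⟩ := h
    rcases h with ⟨x, y, he, h1, h2⟩ | ⟨x, y, he, h1, h2⟩
    · exact Or.inr ⟨x, y, he.symm, h1, h2⟩
    · refine Or.inr ⟨y, x, ?_, h2.symm, h1.symm⟩
      rw [he]
      exact Sym2.eq_swap

lemma adj_pair {H : SimpleGraph V} {a b p q : V} (hab : H.Adj a b)
    (hp : p = a ∨ p = b) (hq : q = a ∨ q = b) (hne : p ≠ q) : H.Adj p q := by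
  rcases hp with rfl | rfl <;> rcases hq with rfl | rfl <;>
    first
      | exact absurd rfl hne
      | exact hab
      | exact hab.symm

/-- The scanning lemma: any walk in the one-edge construction either lifts to `H`,
or yields a short odd closed walk in `H`, or decomposes with pending attachments. -/
lemma scan {H : SimpleGraph V} {a b : V} (hab : H.Adj a b) :
    ∀ {x y : V} (w : (addE H s(a, b)).Walk x y),
      (∃ W : H.Walk x y, W.length = w.length) ∨
      (∃ (z : V) (C : H.Walk z z), C.length % 2 = 1 ∧ C.length ≤ w.length + 2) ∨
      (∃ (p q : V) (P : H.Walk x p) (Q : H.Walk q y),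
        (p = a ∨ p = b) ∧ (q = a ∨ q = b) ∧
        P.length + Q.length ≤ w.length + 1 ∧
        ((p = q ∧ (w.length + P.length + Q.length) % 2 = 0) ∨
         (p ≠ q ∧ (w.length + P.length + Q.length) % 2 = 1))) := by
  intro x y w
  induction w with
  | nil => exact Or.inl ⟨Walk.nil, rfl⟩
  | @cons x x₁ y hadj w ih =>
    rcases addE_adj hadj with hold | ⟨p', q', hpq', hxp', hq'x₁⟩
    · -- the first edge is an old edge
      rcases ih with ⟨W, hW⟩ | ⟨z, C, hC1, hC2⟩ | ⟨p, q, P, Q, hp, hq, hlen, hpar⟩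
      · exact Or.inl ⟨Walk.cons hold W, by simp [hW]⟩
      · exact Or.inr (Or.inl ⟨z, C, hC1, by simp only [Walk.length_cons]; omega⟩)
      · refine Or.inr (Or.inr ⟨p, q, Walk.cons hold P, Q, hp, hq, ?_, ?_⟩)
        · simp only [Walk.length_cons]; omega
        · simp only [Walk.length_cons]
          rcases hpar with ⟨h1, h2⟩ | ⟨h1, h2⟩
          · exact Or.inl ⟨h1, by omega⟩
          · exact Or.inr ⟨h1, by omega⟩
    · -- the first edge is a new edge
      have hmem : (p' = a ∨ p' = b) ∧ (q' = a ∨ q' = b) ∧ p' ≠ q' := by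
        rw [Sym2.eq_iff] at hpq'
        rcases hpq' with ⟨rfl, rfl⟩ | ⟨rfl, rfl⟩
        · exact ⟨Or.inl rfl, Or.inr rfl, hab.ne⟩
        · exact ⟨Or.inr rfl, Or.inl rfl, fun hh => hab.ne hh.symm⟩
      obtain ⟨hp', hq', hpq'ne⟩ := hmem
      rcases ih with ⟨W, hW⟩ | ⟨z, C, hC1, hC2⟩ | ⟨p₁, q₁, P₁, Q, hp₁, hq₁, hlen, hpar⟩
      · -- start a pending decomposition
        refine Or.inr (Or.inr ⟨p', q', Walk.cons hxp' Walk.nil, Walk.cons hq'x₁ W,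
          hp', hq', ?_, Or.inr ⟨hpq'ne, ?_⟩⟩)
        · simp only [Walk.length_cons, Walk.length_nil]; omega
        · simp only [Walk.length_cons, Walk.length_nil]; omega
      · exact Or.inr (Or.inl ⟨z, C, hC1, by simp only [Walk.length_cons]; omega⟩)
      · -- close off an internal piece
        by_cases hcl : p₁ = q'
        · -- piece without a closing edge
          by_cases hparity : (P₁.length + 1) % 2 = 1
          · refine Or.inr (Or.inl ⟨q', (Walk.cons hq'x₁ P₁).copy rfl hcl, ?_, ?_⟩)
            · simpa using hparity
            · simp only [Walk.length_copy, Walk.length_cons]; omega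
          · refine Or.inr (Or.inr ⟨p', q₁, Walk.cons hxp' Walk.nil, Q, hp', hq₁, ?_, ?_⟩)
            · simp only [Walk.length_cons, Walk.length_nil]; omega
            · simp only [Walk.length_cons, Walk.length_nil]
              obtain rfl | rfl := hp₁ <;> obtain rfl | rfl := hq₁ <;>
                obtain rfl | rfl := hp' <;> obtain rfl | rfl := hq' <;>
                  rcases hpar with ⟨heq, h2⟩ | ⟨hneq, h2⟩ <;>
                    first
                      | exact absurd hcl hab.ne
                      | exact absurd hcl (Ne.symm hab.ne)
                      | exact absurd rfl hpq'ne
                      | exact absurd heq hab.ne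
                      | exact absurd heq (Ne.symm hab.ne)
                      | exact absurd rfl hneq
                      | exact Or.inl ⟨rfl, by omega⟩
                      | exact Or.inr ⟨hab.ne, by omega⟩
                      | exact Or.inr ⟨Ne.symm hab.ne, by omega⟩
        · -- piece with a closing edge
          have hadj₂ : H.Adj p₁ q' := adj_pair hab hp₁ hq' hcl
          by_cases hparity : (P₁.length + 2) % 2 = 1
          · refine Or.inr (Or.inl ⟨q',
              (Walk.cons hq'x₁ P₁).append (Walk.cons hadj₂ Walk.nil), ?_, ?_⟩)
            · simp only [Walk.length_append, Walk.length_cons, Walk.length_nil]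
              omega
            · simp only [Walk.length_append, Walk.length_cons, Walk.length_nil]
              omega
          · refine Or.inr (Or.inr ⟨p', q₁, Walk.cons hxp' Walk.nil, Q, hp', hq₁, ?_, ?_⟩)
            · simp only [Walk.length_cons, Walk.length_nil]; omega
            · simp only [Walk.length_cons, Walk.length_nil]
              obtain rfl | rfl := hp₁ <;> obtain rfl | rfl := hq₁ <;>
                obtain rfl | rfl := hp' <;> obtain rfl | rfl := hq' <;>
                  rcases hpar with ⟨heq, h2⟩ | ⟨hneq, h2⟩ <;>
                    first
                      | exact absurd rfl hcl
                      | exact absurd rfl hpq'ne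
                      | exact absurd heq hab.ne
                      | exact absurd heq (Ne.symm hab.ne)
                      | exact absurd rfl hneq
                      | exact Or.inl ⟨rfl, by omega⟩
                      | exact Or.inr ⟨hab.ne, by omega⟩
                      | exact Or.inr ⟨Ne.symm hab.ne, by omega⟩

/-- The one-edge construction decreases the odd-closed-walk bound by at most two. -/
lemma addE_noOdd {H : SimpleGraph V} {a b : V} (hab : H.Adj a b) {n : ℕ}
    (hyp : ∀ ⦃z : V⦄ (C : H.Walk z z), Odd C.length → n + 2 ≤ C.length) :
    ∀ ⦃z : V⦄ (C : (addE H s(a, b)).Walk z z), Odd C.length → n ≤ C.length := by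
  intro z C hodd
  rw [Nat.odd_iff] at hodd
  rcases scan hab C with ⟨W, hW⟩ | ⟨z', C', hC1, hC2⟩ | ⟨p, q, P, Q, hp, hq, hlen, hpar⟩
  · have := hyp W (Nat.odd_iff.mpr (by omega))
    omega
  · have := hyp C' (Nat.odd_iff.mpr hC1)
    omega
  · by_cases hpq : p = q
    · rcases hpar with ⟨-, h2⟩ | ⟨hne, -⟩
      · have hw : ((Q.append P).copy rfl hpq).length % 2 = 1 := by
          simp only [Walk.length_copy, Walk.length_append]
          omega
        have := hyp _ (Nat.odd_iff.mpr hw)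
        simp only [Walk.length_copy, Walk.length_append] at this
        omega
      · exact absurd hpq hne
    · rcases hpar with ⟨heq, -⟩ | ⟨-, h2⟩
      · exact absurd heq hpq
      · have hadj₂ : H.Adj p q := adj_pair hab hp hq hpq
        have hw : ((Q.append P).append (Walk.cons hadj₂ Walk.nil)).length % 2 = 1 := by
          simp only [Walk.length_append, Walk.length_cons, Walk.length_nil]
          omega
        have := hyp _ (Nat.odd_iff.mpr hw)
        simp only [Walk.length_append, Walk.length_cons, Walk.length_nil] at this
        omega

lemma addE_noOdd' {H : SimpleGraph V} {e : Sym2 V} (he : e ∈ H.edgeSet) {n : ℕ}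
    (hyp : ∀ ⦃z : V⦄ (C : H.Walk z z), Odd C.length → n + 2 ≤ C.length) :
    ∀ ⦃z : V⦄ (C : (addE H e).Walk z z), Odd C.length → n ≤ C.length := by
  induction e using Sym2.ind with
  | _ a b => exact addE_noOdd ((H.mem_edgeSet).mp he) hyp

lemma foldl_noOdd {G : SimpleGraph V} :
    ∀ (es : List (Sym2 V)) (H : SimpleGraph V) (n : ℕ), G ≤ H →
      (∀ e ∈ es, e ∈ G.edgeSet) →
      (∀ ⦃z : V⦄ (C : H.Walk z z), Odd C.length → n + 2 * es.length ≤ C.length) →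
      (∀ ⦃z : V⦄ (C : (es.foldl addE H).Walk z z), Odd C.length → n ≤ C.length)
  | [], H, n, _, _, hyp => by simpa using hyp
  | e :: tl, H, n, hGH, hes, hyp => by
      simp only [List.foldl_cons]
      refine foldl_noOdd tl (addE H e) n (le_trans hGH (le_addE H e))
        (fun f hf => hes f (List.mem_cons_of_mem _ hf)) ?_
      have he : e ∈ H.edgeSet :=
        SimpleGraph.edgeSet_mono hGH (hes e List.mem_cons_self)
      refine addE_noOdd' he ?_
      intro z C hodd
      have := hyp C hodd
      simp only [List.length_cons] at this
      omega


/-! ### Even-connected pairs are edges of the iterated one-edge construction -/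

lemma exists_first_index {α : Type*} {e : α} :
    ∀ {ps : List α}, e ∈ ps → ∃ t, ∃ h : t < ps.length, ps[t] = e ∧ e ∉ ps.take t := by
  intro ps
  induction ps with
  | nil => simp
  | cons a tl ih =>
      intro h
      by_cases ha : a = e
      · exact ⟨0, by simp, by simpa using ha, by simp⟩
      · have he : e ∈ tl := by
          rcases List.mem_cons.mp h with h | h
          · exact absurd h.symm ha
          · exact h
        obtain ⟨t, ht, h1, h2⟩ := ih he
        refine ⟨t + 1, by simpa using ht, by simpa using h1, ?_⟩
        simp only [List.take_succ_cons, List.mem_cons, not_or]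
        exact ⟨fun hh => ha hh.symm, h2⟩

lemma bridge {G : SimpleGraph V} :
    ∀ (es : List (Sym2 V)),
      (∀ ⦃z : V⦄ (C : G.Walk z z), Odd C.length → 2 * es.length + 1 ≤ C.length) →
      ∀ {u v : V} (p : G.Walk u v) (l : ℕ), 1 ≤ l → p.length = 2 * l + 1 →
        (↑(List.ofFn fun t : Fin l => s(p.getVert (2 * ↑t + 1), p.getVert (2 * ↑t + 2))) :
          Multiset (Sym2 V)) ≤ (↑es : Multiset (Sym2 V)) →
        u ≠ v → (es.foldl addE G).Adj u v := by
  intro es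
  induction es using List.reverseRecOn with
  | nil =>
      intro _ u v p l hl hlen hle hne
      exfalso
      have := Multiset.card_le_card hle
      simp at this
      omega
  | append_singleton L e ih =>
      intro hB u v p l hl hlen hle hne
      classical
      rw [List.foldl_append, List.foldl_cons, List.foldl_nil]
      set K := L.foldl addE G with hK
      set ps := (List.ofFn fun t : Fin l => s(p.getVert (2 * ↑t + 1), p.getVert (2 * ↑t + 2)))
        with hps
      have hBL : ∀ ⦃z : V⦄ (C : G.Walk z z), Odd C.length → 2 * L.length + 1 ≤ C.length := by
        intro z C hC
        have := hB C hC
        simp only [List.length_append, List.length_singleton] at this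
        omega
      have hcard : l ≤ L.length + 1 := by
        have := Multiset.card_le_card hle
        simpa [hps] using this
      by_cases hLe : (↑ps : Multiset (Sym2 V)) ≤ (↑L : Multiset (Sym2 V))
      · exact le_addE K e (ih hBL p l hl hlen hLe hne)
      · -- `e` occurs among the pairs of `p`
        have hepps : e ∈ ps := by
          by_contra hnot
          apply hLe
          rw [Multiset.le_iff_count] at hle ⊢
          intro f
          have hc := hle f
          rw [Multiset.coe_count, Multiset.coe_count] at hc
          rw [Multiset.coe_count, Multiset.coe_count]
          rw [List.count_append] at hc
          by_cases hf : f = e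
          · subst hf
            have h0 : ps.count f = 0 := List.count_eq_zero_of_not_mem hnot
            omega
          · have h1 : List.count f [e] = 0 :=
              List.count_eq_zero.mpr (by simpa using hf)
            omega
        obtain ⟨t, ht, hte, htt⟩ := exists_first_index hepps
        have htl : t < l := by simpa [hps] using ht
        -- the two attachment vertices
        set x := p.getVert (2 * t + 1) with hx
        set y := p.getVert (2 * t + 2) with hy
        have hexy : e = s(x, y) := by
          have hgx : ps[t] = s(p.getVert (2 * t + 1), p.getVert (2 * t + 2)) := by
            simp [hps]
          rw [← hte, hgx]
        -- prefix and suffix walks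
        set P := takeW p (2 * t + 1) with hP
        set S := dropW p (2 * t + 2) with hS
        have hPlen : P.length = 2 * t + 1 := takeW_length p _ (by omega)
        have hSlen : S.length = 2 * (l - t - 1) + 1 := by
          rw [hS, dropW_length, hlen]
          omega
        -- pair lists of the prefix and suffix
        have hpsP : (List.ofFn fun j : Fin t =>
            s(P.getVert (2 * ↑j + 1), P.getVert (2 * ↑j + 2))) = ps.take t := by
          apply List.ext_getElem
          · simp [hps]
            omega
          · intro i h1 h2
            rw [List.getElem_take]
            simp only [List.getElem_ofFn, hps]
            have hi : i < t := by simpa using h1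
            have e1 : P.getVert (2 * i + 1) = p.getVert (2 * i + 1) :=
              takeW_getVert p _ _ (by omega)
            have e2 : P.getVert (2 * i + 2) = p.getVert (2 * i + 2) :=
              takeW_getVert p _ _ (by omega)
            rw [e1, e2]
        have hpsS : (List.ofFn fun j : Fin (l - t - 1) =>
            s(S.getVert (2 * ↑j + 1), S.getVert (2 * ↑j + 2))) = ps.drop (t + 1) := by
          apply List.ext_getElem
          · simp [hps]
            omega
          · intro i h1 h2
            rw [List.getElem_drop]
            simp only [List.getElem_ofFn, hps]
            have e1 : S.getVert (2 * i + 1) = p.getVert (2 * (t + 1 + i) + 1) := by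
              rw [hS, dropW_getVert]
              congr 1
              omega
            have e2 : S.getVert (2 * i + 2) = p.getVert (2 * (t + 1 + i) + 2) := by
              rw [hS, dropW_getVert]
              congr 1
              omega
            rw [e1, e2]
        -- multiset bounds for prefix and suffix pairs
        have hsplit : ps.take t ++ e :: ps.drop (t + 1) = ps := by
          conv_rhs => rw [← List.take_append_drop t ps]
          congr 1
          rw [List.drop_eq_getElem_cons ht, hte]
        have hcount : ∀ f : Sym2 V, ps.count f ≤ L.count f + List.count f [e] := by
          intro f
          have hc := Multiset.le_iff_count.mp hle f
          rw [Multiset.coe_count, Multiset.coe_count, List.count_append] at hc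
          exact hc
        have hmps : (↑ps : Multiset (Sym2 V))
            = ↑(ps.take t) + (e ::ₘ ↑(ps.drop (t + 1))) := by
          rw [Multiset.cons_coe, Multiset.coe_add, hsplit]
        have hRe : (↑(L ++ [e]) : Multiset (Sym2 V)) = e ::ₘ (↑L : Multiset (Sym2 V)) := by
          rw [← Multiset.coe_add, Multiset.coe_singleton, add_comm, Multiset.singleton_add]
        have hle' : (↑(ps.take t) : Multiset (Sym2 V)) + (e ::ₘ ↑(ps.drop (t + 1)))
            ≤ e ::ₘ (↑L : Multiset (Sym2 V)) := by
          rw [← hmps, ← hRe]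
          exact hle
        have htake_le : (↑(ps.take t) : Multiset (Sym2 V)) ≤ (↑L : Multiset (Sym2 V)) := by
          rw [Multiset.le_iff_count]
          intro f
          rw [Multiset.coe_count, Multiset.coe_count]
          by_cases hf : f = e
          · subst hf
            have h0 : (ps.take t).count f = 0 := List.count_eq_zero_of_not_mem htt
            omega
          · have h1 : (ps.take t).count f ≤ ps.count f := (List.take_sublist t ps).count_le f
            have h2 := hcount f
            have h3 : List.count f [e] = 0 :=
              List.count_eq_zero.mpr (by simpa using hf)
            omega
        have hdrop_le : (↑(ps.drop (t + 1)) : Multiset (Sym2 V)) ≤ (↑L : Multiset (Sym2 V)) := by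
          have h1 : e ::ₘ (↑(ps.drop (t + 1)) : Multiset (Sym2 V))
              ≤ e ::ₘ (↑L : Multiset (Sym2 V)) :=
            le_trans (le_add_self (a := _) (b := _)) hle'
          exact (Multiset.cons_le_cons_iff e).mp h1
        -- adjacency from u to x in K
        have hux : K.Adj u x := by
          by_cases ht0 : t = 0
          · subst ht0
            have hadj := p.adj_getVert_succ (i := 0) (by omega)
            rw [p.getVert_zero] at hadj
            exact le_foldl_addE L G hadj
          · have hnex : u ≠ x := by
              intro heq
              have hodd : Odd (P.copy rfl heq.symm).length := by
                rw [Nat.odd_iff]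
                simp only [Walk.length_copy, hPlen]
                omega
              have := hB (P.copy rfl heq.symm) hodd
              simp only [Walk.length_copy, hPlen, List.length_append,
                List.length_singleton] at this
              omega
            exact ih hBL P t (by omega) hPlen (by rw [hpsP]; exact htake_le) hnex
        -- adjacency from y to v in K
        have hyv : K.Adj y v := by
          by_cases hl' : l - t - 1 = 0
          · have hS1 : S.length = 1 := by omega
            have hadj := S.adj_getVert_succ (i := 0) (by omega)
            rw [S.getVert_zero] at hadj
            have hS2 : S.getVert 1 = v := by
              conv_lhs => rw [← hS1]
              exact S.getVert_length
            rw [hS2] at hadj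
            exact le_foldl_addE L G hadj
          · have hney : y ≠ v := by
              intro heq
              have hodd : Odd (S.copy heq rfl).length := by
                rw [Nat.odd_iff]
                simp only [Walk.length_copy, hSlen]
                omega
              have := hB (S.copy heq rfl) hodd
              simp only [Walk.length_copy, hSlen, List.length_append,
                List.length_singleton] at this
              omega
            exact ih hBL S (l - t - 1) (by omega) hSlen (by rw [hpsS]; exact hdrop_le) hney
        refine (SimpleGraph.sup_adj _ _ _ _).mpr (Or.inr ?_)
        rw [SimpleGraph.fromRel_adj]
        exact ⟨hne, Or.inl ⟨x, y, hexy, hux, hyv⟩⟩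

end OddGirthAux



/-- Vertices `u` and `v` are even-connected with respect to the product of the edges in
the list `es`. -/
def EvenConnected {V : Type*} (G : SimpleGraph V) (es : List (Sym2 V)) (u v : V) : Prop :=
  ∃ (p : G.Walk u v) (l : ℕ), 1 ≤ l ∧ p.length = 2 * l + 1 ∧
    (↑(List.ofFn fun t : Fin l => s(p.getVert (2 * ↑t + 1), p.getVert (2 * ↑t + 2))) :
      Multiset (Sym2 V)) ≤ (↑es : Multiset (Sym2 V))

/-- Let `G` have odd-girth at least `2k+1`, let `1 ≤ s ≤ k-1` and fix edges
`e₁, …, e_s` of `G`.  Let `G_s` be obtained from `G` by adding, for each pair of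
distinct vertices `u, v` that are even-connected with respect to `e₁ ⋯ e_s`, the edge
`{u,v}`.  Then `G_s` contains no odd cycle of length at most `2(k-s)-1`. -/
theorem oddGirth_of_evenConnection_graph {V : Type*} [Fintype V] (G : SimpleGraph V)
    (k : ℕ) (hk : 2 ≤ k)
    (hgirth : ∀ (u : V) (c : G.Walk u u), c.IsCycle → Odd c.length → 2 * k + 1 ≤ c.length)
    (es : List (Sym2 V)) (hes : ∀ e ∈ es, e ∈ G.edgeSet)
    (hs1 : 1 ≤ es.length) (hsk : es.length ≤ k - 1)
    (Gs : SimpleGraph V)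
    (hGs : Gs = G ⊔ SimpleGraph.fromRel (fun u v => EvenConnected G es u v)) :
    ∀ (u : V) (c : Gs.Walk u u), c.IsCycle → Odd c.length →
      2 * (k - es.length) + 1 ≤ c.length := by
  intro u c hcyc hodd
  classical
  have hGodd : ∀ ⦃z : V⦄ (C : G.Walk z z), Odd C.length → 2 * k + 1 ≤ C.length :=
    OddGirthAux.noOdd_of_cycleBound hgirth
  have hB : ∀ ⦃z : V⦄ (C : G.Walk z z), Odd C.length → 2 * es.length + 1 ≤ C.length := by
    intro z C hC
    have := hGodd C hC
    omega
  have hle : Gs ≤ es.foldl OddGirthAux.addE G := by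
    rw [hGs]
    intro a b hadj
    rcases (SimpleGraph.sup_adj _ _ _ _).mp hadj with hadj | hadj
    · exact OddGirthAux.le_foldl_addE es G hadj
    · rw [SimpleGraph.fromRel_adj] at hadj
      obtain ⟨hne, hEC | hEC⟩ := hadj
      · obtain ⟨p, l, hl, hlen, hps⟩ := hEC
        exact OddGirthAux.bridge es hB p l hl hlen hps hne
      · obtain ⟨p, l, hl, hlen, hps⟩ := hEC
        exact (OddGirthAux.bridge es hB p l hl hlen hps (Ne.symm hne)).symm
  have hfold := OddGirthAux.foldl_noOdd es G (2 * (k - es.length) + 1) le_rfl hes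
    (by
      intro z C hC
      have := hGodd C hC
      omega)
  have hwalk := hfold (c.mapLe hle)
    (by simpa [SimpleGraph.Walk.mapLe] using hodd)
  simpa [SimpleGraph.Walk.mapLe] using hwalk
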